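/- The embedding of sMC into LJ⁺ + (Peirce) holds cut-free: a sequent Γ ⇒ γ is provable in sMC without cut if and only if f(Γ) ⇒ f(γ) is provable in LJ⁺ + (Peirce) without cut. -/
import Mathlib


inductive Fm : Type
  | var : ℕ → Fm
  | conj : Fm → Fm → Fm
  | disj : Fm → Fm → Fm
  | impl : Fm → Fm → Fm
  | neg : Fm → Fm
  deriving DecidableEq

open Fm

/-- Optional rules: cut, (ex-middle), (Peirce), (g-ex-middle), (at-ex-middle). -/
structure Rules where
  cut : Bool := false
  exMid : Bool := false
  peirce : Bool := false
  gem : Bool := false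
  atEx : Bool := false

/-- The sequent calculus sC for Wansing's connexive logic C, with optional extra rules. -/
inductive SC (R : Rules) : Finset Fm → Fm → Prop
  | init1 (p : ℕ) (Γ : Finset Fm) : SC R (insert (var p) Γ) (var p)
  | init2 (p : ℕ) (Γ : Finset Fm) : SC R (insert (neg (var p)) Γ) (neg (var p))
  | cut {Γ Δ : Finset Fm} {a c : Fm} : R.cut = true →
      SC R Γ a → SC R (insert a Δ) c → SC R (Γ ∪ Δ) c
  | implL {Γ Δ : Finset Fm} {a b c : Fm} :
      SC R Γ a → SC R (insert b Δ) c → SC R (insert (impl a b) (Γ ∪ Δ)) c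
  | implR {Γ : Finset Fm} {a b : Fm} :
      SC R (insert a Γ) b → SC R Γ (impl a b)
  | conjL {Γ : Finset Fm} {a b c : Fm} :
      SC R (insert a (insert b Γ)) c → SC R (insert (conj a b) Γ) c
  | conjR {Γ : Finset Fm} {a b : Fm} :
      SC R Γ a → SC R Γ b → SC R Γ (conj a b)
  | disjL {Γ : Finset Fm} {a b c : Fm} :
      SC R (insert a Γ) c → SC R (insert b Γ) c → SC R (insert (disj a b) Γ) c
  | disjR1 {Γ : Finset Fm} {a b : Fm} : SC R Γ a → SC R Γ (disj a b)
  | disjR2 {Γ : Finset Fm} {a b : Fm} : SC R Γ b → SC R Γ (disj a b)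
  | negnegL {Γ : Finset Fm} {a c : Fm} :
      SC R (insert a Γ) c → SC R (insert (neg (neg a)) Γ) c
  | negnegR {Γ : Finset Fm} {a : Fm} : SC R Γ a → SC R Γ (neg (neg a))
  | negimplL {Γ Δ : Finset Fm} {a b c : Fm} :
      SC R Γ a → SC R (insert (neg b) Δ) c → SC R (insert (neg (impl a b)) (Γ ∪ Δ)) c
  | negimplR {Γ : Finset Fm} {a b : Fm} :
      SC R (insert a Γ) (neg b) → SC R Γ (neg (impl a b))
  | negconjL {Γ : Finset Fm} {a b c : Fm} :
      SC R (insert (neg a) Γ) c → SC R (insert (neg b) Γ) c →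
      SC R (insert (neg (conj a b)) Γ) c
  | negconjR1 {Γ : Finset Fm} {a b : Fm} : SC R Γ (neg a) → SC R Γ (neg (conj a b))
  | negconjR2 {Γ : Finset Fm} {a b : Fm} : SC R Γ (neg b) → SC R Γ (neg (conj a b))
  | negdisjL {Γ : Finset Fm} {a b c : Fm} :
      SC R (insert (neg a) (insert (neg b) Γ)) c → SC R (insert (neg (disj a b)) Γ) c
  | negdisjR {Γ : Finset Fm} {a b : Fm} :
      SC R Γ (neg a) → SC R Γ (neg b) → SC R Γ (neg (disj a b))
  | exMid {Γ : Finset Fm} {a c : Fm} : R.exMid = true →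
      SC R (insert (neg a) Γ) c → SC R (insert a Γ) c → SC R Γ c
  | peirce {Γ : Finset Fm} {a b : Fm} : R.peirce = true →
      SC R (insert (impl a b) Γ) a → SC R Γ a
  | gem {Γ : Finset Fm} {a b c : Fm} : R.gem = true →
      SC R (insert (impl a b) Γ) c → SC R (insert a Γ) c → SC R Γ c
  | atEx {Γ : Finset Fm} {p : ℕ} {c : Fm} : R.atEx = true →
      SC R (insert (neg (var p)) Γ) c → SC R (insert (var p) Γ) c → SC R Γ c

/-- sC (with cut). -/
def sC : Rules := { cut := true }
/-- cut-free sC. -/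
def sCcf : Rules := {}
/-- sC3 = sC + (ex-middle). -/
def sC3 : Rules := { cut := true, exMid := true }
/-- sMC = sC + (Peirce). -/
def sMC : Rules := { cut := true, peirce := true }
/-- sMC* = sC + (g-ex-middle). -/
def sMCstar : Rules := { cut := true, gem := true }

/-- Positive intuitionistic formulas over Φ ∪ Φ' (pos p = p ∈ Φ, ppos p = p' ∈ Φ'). -/
inductive PFm : Type
  | pos : ℕ → PFm
  | ppos : ℕ → PFm
  | conj : PFm → PFm → PFm
  | disj : PFm → PFm → PFm
  | impl : PFm → PFm → PFm
  deriving DecidableEq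

mutual
/-- The translation f from the connexive language into the positive language. -/
def fpos : Fm → PFm
  | .var p => .pos p
  | .conj a b => .conj (fpos a) (fpos b)
  | .disj a b => .disj (fpos a) (fpos b)
  | .impl a b => .impl (fpos a) (fpos b)
  | .neg a => fneg a
/-- f(∼α). -/
def fneg : Fm → PFm
  | .var p => .ppos p
  | .conj a b => .disj (fneg a) (fneg b)
  | .disj a b => .conj (fneg a) (fneg b)
  | .impl a b => .impl (fpos a) (fneg b)
  | .neg a => fpos a
end

/-- Optional rules for the positive calculus. -/
structure PRules where
  cut : Bool := false
  peirce : Bool := false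

/-- LJ⁺: single-succedent positive intuitionistic sequent calculus, optional cut/Peirce. -/
inductive LJ (R : PRules) : Finset PFm → PFm → Prop
  | init1 (p : ℕ) (Γ : Finset PFm) : LJ R (insert (.pos p) Γ) (.pos p)
  | init2 (p : ℕ) (Γ : Finset PFm) : LJ R (insert (.ppos p) Γ) (.ppos p)
  | cut {Γ Δ : Finset PFm} {a c : PFm} : R.cut = true →
      LJ R Γ a → LJ R (insert a Δ) c → LJ R (Γ ∪ Δ) c
  | implL {Γ Δ : Finset PFm} {a b c : PFm} :
      LJ R Γ a → LJ R (insert b Δ) c → LJ R (insert (.impl a b) (Γ ∪ Δ)) c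
  | implR {Γ : Finset PFm} {a b : PFm} :
      LJ R (insert a Γ) b → LJ R Γ (.impl a b)
  | conjL {Γ : Finset PFm} {a b c : PFm} :
      LJ R (insert a (insert b Γ)) c → LJ R (insert (.conj a b) Γ) c
  | conjR {Γ : Finset PFm} {a b : PFm} :
      LJ R Γ a → LJ R Γ b → LJ R Γ (.conj a b)
  | disjL {Γ : Finset PFm} {a b c : PFm} :
      LJ R (insert a Γ) c → LJ R (insert b Γ) c → LJ R (insert (.disj a b) Γ) c
  | disjR1 {Γ : Finset PFm} {a b : PFm} : LJ R Γ a → LJ R Γ (.disj a b)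
  | disjR2 {Γ : Finset PFm} {a b : PFm} : LJ R Γ b → LJ R Γ (.disj a b)
  | peirce {Γ : Finset PFm} {a b : PFm} : R.peirce = true →
      LJ R (insert (.impl a b) Γ) a → LJ R Γ a

section Embedding

@[simp] lemma fpos_var (p : ℕ) : fpos (var p) = .pos p := rfl
@[simp] lemma fpos_conj (a b : Fm) : fpos (conj a b) = .conj (fpos a) (fpos b) := rfl
@[simp] lemma fpos_disj (a b : Fm) : fpos (disj a b) = .disj (fpos a) (fpos b) := rfl
@[simp] lemma fpos_impl (a b : Fm) : fpos (impl a b) = .impl (fpos a) (fpos b) := rfl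
@[simp] lemma fpos_neg (a : Fm) : fpos (neg a) = fneg a := rfl
@[simp] lemma fneg_var (p : ℕ) : fneg (var p) = .ppos p := rfl
@[simp] lemma fneg_conj (a b : Fm) : fneg (conj a b) = .disj (fneg a) (fneg b) := rfl
@[simp] lemma fneg_disj (a b : Fm) : fneg (disj a b) = .conj (fneg a) (fneg b) := rfl
@[simp] lemma fneg_impl (a b : Fm) : fneg (impl a b) = .impl (fpos a) (fneg b) := rfl
@[simp] lemma fneg_neg (a : Fm) : fneg (neg a) = fpos a := rfl

/-- Canonical preimage of a positive formula under `fpos`. -/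
def gFm : PFm → Fm
  | .pos p => var p
  | .ppos p => neg (var p)
  | .conj a b => conj (gFm a) (gFm b)
  | .disj a b => disj (gFm a) (gFm b)
  | .impl a b => impl (gFm a) (gFm b)

@[simp] lemma fpos_gFm (x : PFm) : fpos (gFm x) = x := by
  induction x <;> simp [gFm, *]

/-- `Good R φ x` says that `φ` supports SC-admissible left and right rules
    matching the top connective of `x`. -/
def Good (R : Rules) (φ : Fm) : PFm → Prop
  | .pos p =>
      (∀ Γ c, SC R (insert (var p) Γ) c → SC R (insert φ Γ) c) ∧
      (∀ Γ, SC R Γ (var p) → SC R Γ φ)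
  | .ppos p =>
      (∀ Γ c, SC R (insert (neg (var p)) Γ) c → SC R (insert φ Γ) c) ∧
      (∀ Γ, SC R Γ (neg (var p)) → SC R Γ φ)
  | .impl a b => ∃ α β, fpos α = a ∧ fpos β = b ∧
      (∀ Γ Δ c, SC R Γ α → SC R (insert β Δ) c → SC R (insert φ (Γ ∪ Δ)) c) ∧
      (∀ Γ, SC R (insert α Γ) β → SC R Γ φ)
  | .conj a b => ∃ α β, fpos α = a ∧ fpos β = b ∧
      (∀ Γ c, SC R (insert α (insert β Γ)) c → SC R (insert φ Γ) c) ∧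
      (∀ Γ, SC R Γ α → SC R Γ β → SC R Γ φ)
  | .disj a b => ∃ α β, fpos α = a ∧ fpos β = b ∧
      (∀ Γ c, SC R (insert α Γ) c → SC R (insert β Γ) c → SC R (insert φ Γ) c) ∧
      (∀ Γ, (SC R Γ α → SC R Γ φ) ∧ (SC R Γ β → SC R Γ φ))

lemma liftGood {R : Rules} {φ : Fm} {x : PFm} (h : Good R φ x) :
    Good R (neg (neg φ)) x := by
  cases x with
  | pos p =>
      obtain ⟨L, Rr⟩ := h
      exact ⟨fun Γ c hh => SC.negnegL (L Γ c hh), fun Γ hh => SC.negnegR (Rr Γ hh)⟩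
  | ppos p =>
      obtain ⟨L, Rr⟩ := h
      exact ⟨fun Γ c hh => SC.negnegL (L Γ c hh), fun Γ hh => SC.negnegR (Rr Γ hh)⟩
  | impl a b =>
      obtain ⟨α, β, hα, hβ, L, Rr⟩ := h
      exact ⟨α, β, hα, hβ, fun Γ Δ c h1 h2 => SC.negnegL (L Γ Δ c h1 h2),
        fun Γ hh => SC.negnegR (Rr Γ hh)⟩
  | conj a b =>
      obtain ⟨α, β, hα, hβ, L, Rr⟩ := h
      exact ⟨α, β, hα, hβ, fun Γ c hh => SC.negnegL (L Γ c hh),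
        fun Γ h1 h2 => SC.negnegR (Rr Γ h1 h2)⟩
  | disj a b =>
      obtain ⟨α, β, hα, hβ, L, Rr⟩ := h
      exact ⟨α, β, hα, hβ, fun Γ c h1 h2 => SC.negnegL (L Γ c h1 h2),
        fun Γ => ⟨fun hh => SC.negnegR ((Rr Γ).1 hh), fun hh => SC.negnegR ((Rr Γ).2 hh)⟩⟩

lemma good (R : Rules) : ∀ φ : Fm, Good R φ (fpos φ) ∧ Good R (neg φ) (fneg φ) := by
  intro φ
  induction φ with
  | var p =>
      exact ⟨⟨fun Γ c h => h, fun Γ h => h⟩, ⟨fun Γ c h => h, fun Γ h => h⟩⟩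
  | conj α β ihα ihβ =>
      constructor
      · exact ⟨α, β, rfl, rfl, fun Γ c h => SC.conjL h, fun Γ h1 h2 => SC.conjR h1 h2⟩
      · exact ⟨neg α, neg β, rfl, rfl, fun Γ c h1 h2 => SC.negconjL h1 h2,
          fun Γ => ⟨fun h => SC.negconjR1 h, fun h => SC.negconjR2 h⟩⟩
  | disj α β ihα ihβ =>
      constructor
      · exact ⟨α, β, rfl, rfl, fun Γ c h1 h2 => SC.disjL h1 h2,
          fun Γ => ⟨fun h => SC.disjR1 h, fun h => SC.disjR2 h⟩⟩
      · exact ⟨neg α, neg β, rfl, rfl, fun Γ c h => SC.negdisjL h,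
          fun Γ h1 h2 => SC.negdisjR h1 h2⟩
  | impl α β ihα ihβ =>
      constructor
      · exact ⟨α, β, rfl, rfl, fun Γ Δ c h1 h2 => SC.implL h1 h2, fun Γ h => SC.implR h⟩
      · exact ⟨α, neg β, rfl, rfl, fun Γ Δ c h1 h2 => SC.negimplL h1 h2,
          fun Γ h => SC.negimplR h⟩
  | neg ψ ih =>
      exact ⟨ih.2, liftGood ih.1⟩

/-- Forward direction of the embedding. -/
lemma fwd {Γ : Finset Fm} {γ : Fm} (h : SC { peirce := true } Γ γ) :
    LJ { peirce := true } (Γ.image fpos) (fpos γ) := by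
  induction h with
  | init1 p Γ => simpa using LJ.init1 p (Γ.image fpos)
  | init2 p Γ => simpa using LJ.init2 p (Γ.image fpos)
  | cut hc _ _ _ _ => exact absurd hc (by decide)
  | implL _ _ ih1 ih2 =>
      simp only [Finset.image_insert, Finset.image_union, fpos_impl] at *
      exact LJ.implL ih1 ih2
  | implR _ ih =>
      simp only [Finset.image_insert, fpos_impl] at *
      exact LJ.implR ih
  | conjL _ ih =>
      simp only [Finset.image_insert, fpos_conj] at *
      exact LJ.conjL ih
  | conjR _ _ ih1 ih2 => exact LJ.conjR ih1 ih2
  | disjL _ _ ih1 ih2 =>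
      simp only [Finset.image_insert, fpos_disj] at *
      exact LJ.disjL ih1 ih2
  | disjR1 _ ih => exact LJ.disjR1 ih
  | disjR2 _ ih => exact LJ.disjR2 ih
  | negnegL _ ih => simpa using ih
  | negnegR _ ih => simpa using ih
  | negimplL _ _ ih1 ih2 =>
      simp only [Finset.image_insert, Finset.image_union, fpos_neg, fneg_impl] at *
      exact LJ.implL ih1 ih2
  | negimplR _ ih =>
      simp only [Finset.image_insert, fpos_neg, fneg_impl] at *
      exact LJ.implR ih
  | negconjL _ _ ih1 ih2 =>
      simp only [Finset.image_insert, fpos_neg, fneg_conj] at *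
      exact LJ.disjL ih1 ih2
  | negconjR1 _ ih => exact LJ.disjR1 ih
  | negconjR2 _ ih => exact LJ.disjR2 ih
  | negdisjL _ ih =>
      simp only [Finset.image_insert, fpos_neg, fneg_disj] at *
      exact LJ.conjL ih
  | negdisjR _ _ ih1 ih2 => exact LJ.conjR ih1 ih2
  | exMid hc _ _ _ _ => exact absurd hc (by decide)
  | peirce _ _ ih =>
      simp only [Finset.image_insert, fpos_impl] at ih
      exact LJ.peirce rfl ih
  | gem hc _ _ _ _ => exact absurd hc (by decide)
  | atEx hc _ _ _ _ => exact absurd hc (by decide)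

/-- Backward direction of the embedding (generalized). -/
lemma back : ∀ {Δ : Finset PFm} {c : PFm}, LJ { peirce := true } Δ c →
    ∀ (Γ : Finset Fm) (γ : Fm), Δ ⊆ Γ.image fpos → fpos γ = c →
    SC { peirce := true } Γ γ := by
  intro Δ c h
  induction h with
  | init1 p Γ₀ =>
      intro Γ γ hsub hγ
      obtain ⟨φ, hφΓ, hφ⟩ := Finset.mem_image.1 (hsub (Finset.mem_insert_self _ _))
      have g1 := (good { peirce := true } φ).1; rw [hφ] at g1
      have g2 := (good { peirce := true } γ).1; rw [hγ] at g2
      have := g1.1 Γ γ (g2.2 (insert (var p) Γ) (SC.init1 p Γ))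
      rwa [Finset.insert_eq_self.2 hφΓ] at this
  | init2 p Γ₀ =>
      intro Γ γ hsub hγ
      obtain ⟨φ, hφΓ, hφ⟩ := Finset.mem_image.1 (hsub (Finset.mem_insert_self _ _))
      have g1 := (good { peirce := true } φ).1; rw [hφ] at g1
      have g2 := (good { peirce := true } γ).1; rw [hγ] at g2
      have := g1.1 Γ γ (g2.2 (insert (neg (var p)) Γ) (SC.init2 p Γ))
      rwa [Finset.insert_eq_self.2 hφΓ] at this
  | cut hc _ _ _ _ => exact absurd hc (by decide)
  | implL _ _ ih1 ih2 =>
      intro Γ γ hsub hγ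
      obtain ⟨φ, hφΓ, hφ⟩ := Finset.mem_image.1 (hsub (Finset.mem_insert_self _ _))
      have g1 := (good { peirce := true } φ).1; rw [hφ] at g1
      obtain ⟨α, β, hα, hβ, L, _⟩ := g1
      have h1 := ih1 Γ α
        (fun x hx => hsub (Finset.mem_insert_of_mem (Finset.mem_union_left _ hx))) hα
      have h2 := ih2 (insert β Γ) γ (by
        rw [Finset.image_insert, hβ]
        exact Finset.insert_subset_insert _
          (fun x hx => hsub (Finset.mem_insert_of_mem (Finset.mem_union_right _ hx)))) hγ
      have := L Γ Γ γ h1 h2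
      rwa [Finset.union_self, Finset.insert_eq_self.2 hφΓ] at this
  | implR _ ih =>
      intro Γ γ hsub hγ
      have g1 := (good { peirce := true } γ).1; rw [hγ] at g1
      obtain ⟨α, β, hα, hβ, _, Rr⟩ := g1
      exact Rr Γ (ih (insert α Γ) β (by
        rw [Finset.image_insert, hα]
        exact Finset.insert_subset_insert _ hsub) hβ)
  | conjL _ ih =>
      intro Γ γ hsub hγ
      obtain ⟨φ, hφΓ, hφ⟩ := Finset.mem_image.1 (hsub (Finset.mem_insert_self _ _))
      have g1 := (good { peirce := true } φ).1; rw [hφ] at g1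
      obtain ⟨α, β, hα, hβ, L, _⟩ := g1
      have h1 := ih (insert α (insert β Γ)) γ (by
        rw [Finset.image_insert, Finset.image_insert, hα, hβ]
        exact Finset.insert_subset_insert _ (Finset.insert_subset_insert _
          (fun x hx => hsub (Finset.mem_insert_of_mem hx)))) hγ
      have := L Γ γ h1
      rwa [Finset.insert_eq_self.2 hφΓ] at this
  | conjR _ _ ih1 ih2 =>
      intro Γ γ hsub hγ
      have g1 := (good { peirce := true } γ).1; rw [hγ] at g1
      obtain ⟨α, β, hα, hβ, _, Rr⟩ := g1
      exact Rr Γ (ih1 Γ α hsub hα) (ih2 Γ β hsub hβ)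
  | disjL _ _ ih1 ih2 =>
      intro Γ γ hsub hγ
      obtain ⟨φ, hφΓ, hφ⟩ := Finset.mem_image.1 (hsub (Finset.mem_insert_self _ _))
      have g1 := (good { peirce := true } φ).1; rw [hφ] at g1
      obtain ⟨α, β, hα, hβ, L, _⟩ := g1
      have h1 := ih1 (insert α Γ) γ (by
        rw [Finset.image_insert, hα]
        exact Finset.insert_subset_insert _
          (fun x hx => hsub (Finset.mem_insert_of_mem hx))) hγ
      have h2 := ih2 (insert β Γ) γ (by
        rw [Finset.image_insert, hβ]
        exact Finset.insert_subset_insert _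
          (fun x hx => hsub (Finset.mem_insert_of_mem hx))) hγ
      have := L Γ γ h1 h2
      rwa [Finset.insert_eq_self.2 hφΓ] at this
  | disjR1 _ ih =>
      intro Γ γ hsub hγ
      have g1 := (good { peirce := true } γ).1; rw [hγ] at g1
      obtain ⟨α, β, hα, hβ, _, Rr⟩ := g1
      exact (Rr Γ).1 (ih Γ α hsub hα)
  | disjR2 _ ih =>
      intro Γ γ hsub hγ
      have g1 := (good { peirce := true } γ).1; rw [hγ] at g1
      obtain ⟨α, β, hα, hβ, _, Rr⟩ := g1
      exact (Rr Γ).2 (ih Γ β hsub hβ)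
  | @peirce Γ₀ a b _ _ ih =>
      intro Γ γ hsub hγ
      refine SC.peirce rfl (ih (insert (impl γ (gFm b)) Γ) γ ?_ hγ)
      rw [Finset.image_insert]
      have : fpos (impl γ (gFm b)) = .impl a b := by simp [hγ]
      rw [this]
      exact Finset.insert_subset_insert _ hsub

end Embedding

/-- cut-free embedding of sMC into LJ⁺ + (Peirce). -/
theorem stmt7 (Γ : Finset Fm) (γ : Fm) :
    SC { peirce := true } Γ γ ↔ LJ { peirce := true } (Γ.image fpos) (fpos γ) := by
  exact ⟨fwd, fun h => back h Γ γ subset_rfl rfl⟩
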